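/- Let k be a commutative ring, let N ≥ 2, and let R = k[α₁, …, α_N, y] be the polynomial ring in N+1 variables. Define elements β₁, …, β_{N+1} of R by β_i = α_i for 1 ≤ i ≤ N−1, β_N = y·α_N, and β_{N+1} = (1−y)·α_N. Then, in the exterior algebra over R of the module of Kähler differentials Ω_{R/k}, with d denoting the universal derivation R → Ω_{R/k}, one has the identity Σ_{i=1}^{N+1} (−1)^i β_i · dβ₁ ∧ ⋯ ∧ (dβ_i omitted) ∧ ⋯ ∧ dβ_{N+1} = −α_N · ( Σ_{i=1}^{N} (−1)^i α_i · dα₁ ∧ ⋯ ∧ (dα_i omitted) ∧ ⋯ ∧ dα_N ) ∧ dy. (This expresses that the pullback of the projective volume form Ω_{N+1} = Σ_{i=1}^{N+1} (−1)^i α_i dα₁∧⋯∧\widehat{dα_i}∧⋯∧dα_{N+1} along the subdivision map ρ(y, α₁, …, α_N) = (α₁, …, α_{N−1}, yα_N, (1−y)α_N) equals −α_N·Ω_N ∧ dy.) -/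

import Mathlib

open MvPolynomial

/-- The "projective volume form" `Ω = Σ_i (−1)^i c_i · dc₁ ∧ ⋯ ∧ (dc_i omitted) ∧ ⋯ ∧ dc_M`
attached to a family `c : Fin M → R`, as an element of the exterior algebra over `R` of the
module of Kähler differentials `Ω_{R/k}` (indices are 1-based, matching `(−1)^(i+1)` for the
0-based index `i`). -/
noncomputable def omegaForm (k : Type*) [CommRing k] (R : Type*) [CommRing R] [Algebra k R]
    {M : ℕ} (c : Fin M → R) : ExteriorAlgebra R (KaehlerDifferential k R) :=
  ∑ i : Fin M, ((-1 : R) ^ ((i : ℕ) + 1) * c i) •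
    ((List.ofFn fun j : Fin M =>
        ExteriorAlgebra.ι R (KaehlerDifferential.D k R (c j))).eraseIdx (i : ℕ)).prod

/-- The family `β₁, …, β_{N+1}` in `R = k[α₁, …, α_N, y]` given by `β_i = α_i` for
`1 ≤ i ≤ N−1`, `β_N = y·α_N`, `β_{N+1} = (1−y)·α_N`.  Here the variable `y` is indexed by
`none` and `α_i` by `some i` in `MvPolynomial (Option (Fin N)) k`. -/
noncomputable def betaFam (k : Type*) [CommRing k] (N : ℕ) (hN : 2 ≤ N) :
    Fin (N + 1) → MvPolynomial (Option (Fin N)) k := fun j =>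
  if h : (j : ℕ) + 1 < N then X (some ⟨(j : ℕ), by omega⟩)
  else if h2 : (j : ℕ) + 1 = N then X none * X (some ⟨N - 1, by omega⟩)
  else (1 - X none) * X (some ⟨N - 1, by omega⟩)


set_option maxHeartbeats 1000000 in
set_option synthInstance.maxHeartbeats 200000 in
open ExteriorAlgebra in
private lemma aux_prod {R M : Type*} [CommRing R] [AddCommGroup M] [Module R M]
    (y a : R) (u v : M) :
    (ι R (y • u + a • v)) * (ι R ((1 - y) • u - a • v)) =
      (-a) • (ι R u * ι R v) := by
  have hvu : ι R v * ι R u = -(ι R u * ι R v) :=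
    eq_neg_of_add_eq_zero_right (by rw [add_comm]; exact ι_add_mul_swap (R := R) v u)
  simp only [map_add, map_sub, map_smul, add_mul, sub_mul, mul_add, mul_sub,
    smul_mul_assoc, mul_smul_comm, smul_smul, ι_sq_zero, smul_zero, hvu]
  module

set_option maxHeartbeats 1000000
set_option synthInstance.maxHeartbeats 200000

/-- The pullback of the projective volume form `Ω_{N+1}` along the subdivision map
`ρ(y, α₁, …, α_N) = (α₁, …, α_{N−1}, y·α_N, (1−y)·α_N)` equals `−α_N · Ω_N ∧ dy`. -/
theorem pullback_omegaForm_subdivision (k : Type*) [CommRing k] (N : ℕ) (hN : 2 ≤ N) :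
    omegaForm k (MvPolynomial (Option (Fin N)) k) (betaFam k N hN) =
      - ((X (some ⟨N - 1, by omega⟩) : MvPolynomial (Option (Fin N)) k) •
        (omegaForm k (MvPolynomial (Option (Fin N)) k)
            (fun i : Fin N => X (some i)) *
          ExteriorAlgebra.ι _
            (KaehlerDifferential.D k (MvPolynomial (Option (Fin N)) k)
              (X (none : Option (Fin N)))))) := by
  obtain ⟨n, rfl⟩ : ∃ n, N = n + 2 := ⟨N - 2, by omega⟩
  simp only [omegaForm, show n + 2 - 1 = n + 1 from rfl]
  set a : MvPolynomial (Option (Fin (n+2))) k := X (some ⟨n + 1, by omega⟩) with ha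
  set y : MvPolynomial (Option (Fin (n+2))) k := X (none) with hy
  set D := KaehlerDifferential.D k (MvPolynomial (Option (Fin (n + 2))) k) with hD
  set I := ExteriorAlgebra.ι (MvPolynomial (Option (Fin (n + 2))) k)
    (M := KaehlerDifferential k (MvPolynomial (Option (Fin (n + 2))) k)) with hI
  set L0 : List (ExteriorAlgebra (MvPolynomial (Option (Fin (n+2))) k)
      (KaehlerDifferential k (MvPolynomial (Option (Fin (n + 2))) k))) :=
    List.ofFn (fun j : Fin (n + 1) => I (D (X (some (Fin.castLE (by omega) j))))) with hL0
  have hF : (List.ofFn fun j : Fin (n + 2 + 1) => I (D (betaFam k (n+2) hN j)))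
      = L0 ++ [I (D (y * a)), I (D ((1 - y) * a))] := by
    rw [List.ofFn_succ' (f := fun j : Fin (n + 2 + 1) => I (D (betaFam k (n+2) hN j))),
      List.ofFn_succ']
    simp only [List.concat_eq_append, List.append_assoc, List.singleton_append]
    congr 1
    · congr 1
      funext i
      simp only [betaFam, Fin.coe_castSucc]
      rw [dif_pos (by omega : (i : ℕ) + 1 < n + 2)]
      rfl
    · congr 2
      · simp only [betaFam, Fin.coe_castSucc, Fin.val_last]
        rw [dif_neg (by omega), dif_pos trivial]
        rfl
      · simp only [betaFam, Fin.val_last]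
        rw [dif_neg (by omega), dif_neg (by omega)]
        rfl
  have hG : (List.ofFn fun j : Fin (n + 2) => I (D (X (some j))))
      = L0 ++ [I (D a)] := by
    rw [List.ofFn_succ' (f := fun j : Fin (n + 2) => I (D (X (some j))))]
    simp only [List.concat_eq_append]
    rfl
  rw [hF, hG]
  conv_lhs => rw [Fin.sum_univ_castSucc, Fin.sum_univ_castSucc]
  conv_rhs => rw [Fin.sum_univ_castSucc]
  have hlen : L0.length = n + 1 := by rw [hL0]; exact List.length_ofFn
  have hd1 : D (y * a) = y • D a + a • D y := Derivation.leibniz D y a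
  have hd2 : D ((1 - y) * a) = (1 - y) • D a - a • D y := by
    rw [Derivation.leibniz, map_sub, Derivation.map_one_eq_zero, zero_sub, smul_neg,
      ← sub_eq_add_neg]
  have hx : I (D (y * a)) * I (D ((1 - y) * a)) = (-a) • (I (D a) * I (D y)) := by
    rw [hd1, hd2, hI]
    exact aux_prod y a (D a) (D y)
  have e1 : ∀ m : ℕ, m < n + 1 →
      (L0 ++ [I (D (y * a)), I (D ((1 - y) * a))]).eraseIdx m
        = L0.eraseIdx m ++ [I (D (y * a)), I (D ((1 - y) * a))] := fun m hm =>
    List.eraseIdx_append_of_lt_length (by omega) _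
  have e2 : (L0 ++ [I (D (y * a)), I (D ((1 - y) * a))]).eraseIdx (n + 1)
      = L0 ++ [I (D ((1 - y) * a))] := by
    rw [List.eraseIdx_append_of_length_le (le_of_eq hlen), hlen, Nat.sub_self]
    rfl
  have e3 : (L0 ++ [I (D (y * a)), I (D ((1 - y) * a))]).eraseIdx (n + 2)
      = L0 ++ [I (D (y * a))] := by
    rw [List.eraseIdx_append_of_length_le (by omega), hlen,
      show n + 2 - (n + 1) = 1 from by omega]
    rfl
  have e4 : ∀ m : ℕ, m < n + 1 →
      (L0 ++ [I (D a)]).eraseIdx m = L0.eraseIdx m ++ [I (D a)] := fun m hm =>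
    List.eraseIdx_append_of_lt_length (by omega) _
  have e5 : (L0 ++ [I (D a)]).eraseIdx (n + 1) = L0 := by
    rw [List.eraseIdx_append_of_length_le (le_of_eq hlen), hlen, Nat.sub_self]
    simp
  conv_rhs => rw [add_mul, Finset.sum_mul, smul_add, Finset.smul_sum, neg_add,
    ← Finset.sum_neg_distrib]
  rw [add_assoc]
  congr 1
  · refine Finset.sum_congr rfl fun i _ => ?_
    simp only [Fin.coe_castSucc]
    rw [e1 (i : ℕ) i.isLt, e4 (i : ℕ) i.isLt]
    simp only [betaFam, Fin.coe_castSucc]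
    rw [dif_pos (by omega : (i : ℕ) + 1 < n + 2)]
    rw [show (X (some i.castSucc) : MvPolynomial (Option (Fin (n + 2))) k)
      = X (some ⟨(i : ℕ), by omega⟩) from rfl]
    simp only [List.prod_append, List.prod_cons, List.prod_nil, mul_one]
    rw [← mul_assoc, mul_assoc ((L0.eraseIdx (i : ℕ)).prod), hx]
    simp only [mul_smul_comm, smul_mul_assoc, smul_smul, mul_assoc]
    module
  · simp only [Fin.coe_castSucc, Fin.val_last]
    rw [e2, e3, e5]
    have hb1 : betaFam k (n + 2) hN (Fin.castSucc (Fin.last (n + 1))) = y * a := by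
      simp only [betaFam, Fin.coe_castSucc, Fin.val_last]
      rw [dif_neg (by omega), dif_pos trivial]
      rfl
    have hb2 : betaFam k (n + 2) hN (Fin.last (n + 2)) = (1 - y) * a := by
      simp only [betaFam, Fin.val_last]
      rw [dif_neg (by omega), dif_neg (by omega)]
      rfl
    rw [hb1, hb2, hd1, hd2]
    rw [show (X (some (Fin.last (n + 1))) : MvPolynomial (Option (Fin (n + 2))) k)
      = a from rfl]
    simp only [map_add, map_sub, map_smul, List.prod_append, List.prod_cons, List.prod_nil,
      mul_one, mul_add, mul_sub, mul_smul_comm, smul_mul_assoc, smul_smul, smul_add, smul_sub]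
    module
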